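/- Strict monotonicity of the softmax-weighted average in the temperature: let N ≥ 1 and let σ : Fin N → ℝ be not constant. Define f : (0, ∞) → ℝ by f(τ) = ∑ i, p_τ i * σ i, where p_τ is the softmax distribution with temperature τ associated to σ. Then f is strictly antitone on (0, ∞): for 0 < τ₁ < τ₂ we have f(τ₁) > f(τ₂). (Lower communication temperatures put strictly more expected weight on better-performing policies.) -/

import Mathlib

open Finset Real

/-- The softmax distribution with temperature `τ` associated to `σ : Fin N → ℝ`. -/
noncomputable def softmax {N : ℕ} (τ : ℝ) (σ : Fin N → ℝ) (i : Fin N) : ℝ :=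
  Real.exp (σ i / τ) / ∑ j, Real.exp (σ j / τ)

lemma softmax_key {N : ℕ} (x : Fin N → ℝ) (b₁ b₂ : ℝ) (hb : b₁ < b₂)
    (hx : ∃ i j, x i ≠ x j) :
    (∑ i, x i * Real.exp (b₁ * x i)) * (∑ i, Real.exp (b₂ * x i)) <
    (∑ i, x i * Real.exp (b₂ * x i)) * (∑ i, Real.exp (b₁ * x i)) := by
  set E₁ : Fin N → ℝ := fun i => Real.exp (b₁ * x i) with hE₁
  set E₂ : Fin N → ℝ := fun i => Real.exp (b₂ * x i) with hE₂
  have hfac : ∀ i j : Fin N,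
      0 ≤ (x i - x j) * (E₂ i * E₁ j - E₁ i * E₂ j) := by
    intro i j
    rcases lt_trichotomy (x i) (x j) with h | h | h
    · have h1 : x i - x j ≤ 0 := by linarith
      have h2 : E₂ i * E₁ j - E₁ i * E₂ j ≤ 0 := by
        rw [sub_nonpos, hE₁, hE₂, ← Real.exp_add, ← Real.exp_add]
        apply Real.exp_le_exp.mpr; nlinarith
      nlinarith [mul_nonneg (neg_nonneg.mpr h1) (neg_nonneg.mpr h2)]
    · simp [hE₁, hE₂, h]
    · apply mul_nonneg
      · linarith
      · rw [sub_nonneg, hE₁, hE₂, ← Real.exp_add, ← Real.exp_add]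
        apply Real.exp_le_exp.mpr; nlinarith
  have hfacpos : ∀ i j : Fin N, x i ≠ x j →
      0 < (x i - x j) * (E₂ i * E₁ j - E₁ i * E₂ j) := by
    intro i j hij
    rcases lt_or_gt_of_ne hij with h | h
    · apply mul_pos_of_neg_of_neg
      · linarith
      · rw [sub_neg, hE₁, hE₂, ← Real.exp_add, ← Real.exp_add]
        apply Real.exp_lt_exp.mpr; nlinarith
    · apply mul_pos
      · linarith
      · rw [sub_pos, hE₁, hE₂, ← Real.exp_add, ← Real.exp_add]
        apply Real.exp_lt_exp.mpr; nlinarith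
  have hS : 0 < ∑ i, ∑ j, (x i - x j) * (E₂ i * E₁ j - E₁ i * E₂ j) := by
    obtain ⟨i₀, j₀, hij⟩ := hx
    rw [← Finset.sum_product']
    apply Finset.sum_pos'
    · rintro ⟨i, j⟩ _; exact hfac i j
    · exact ⟨(i₀, j₀), Finset.mem_univ _, hfacpos i₀ j₀ hij⟩
  have hS2 : ∑ i, ∑ j, (x i - x j) * (E₂ i * E₁ j - E₁ i * E₂ j)
      = 2 * ((∑ i, x i * E₂ i) * (∑ i, E₁ i) - (∑ i, x i * E₁ i) * (∑ i, E₂ i)) := by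
    have hinner : ∀ i : Fin N, ∑ j, (x i - x j) * (E₂ i * E₁ j - E₁ i * E₂ j)
        = x i * E₂ i * (∑ j, E₁ j) - x i * E₁ i * (∑ j, E₂ j)
          - E₂ i * (∑ j, x j * E₁ j) + E₁ i * (∑ j, x j * E₂ j) := by
      intro i
      rw [Finset.mul_sum, Finset.mul_sum, Finset.mul_sum, Finset.mul_sum,
        ← Finset.sum_sub_distrib, ← Finset.sum_sub_distrib, ← Finset.sum_add_distrib]
      exact Finset.sum_congr rfl fun j _ => by ring
    rw [Finset.sum_congr rfl fun i _ => hinner i]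
    rw [Finset.sum_add_distrib, Finset.sum_sub_distrib, Finset.sum_sub_distrib,
      ← Finset.sum_mul, ← Finset.sum_mul, ← Finset.sum_mul, ← Finset.sum_mul]
    ring
  rw [hS2] at hS
  linarith

/-- If `σ` is not constant, the softmax-weighted average `τ ↦ ∑ i, p_τ i * σ i` is
strictly antitone on `(0, ∞)`. -/
theorem softmax_weighted_avg_strictAntiOn
    (N : ℕ) (hN : 1 ≤ N) (σ : Fin N → ℝ) (hσ : ∃ i j, σ i ≠ σ j) :
    StrictAntiOn (fun τ : ℝ => ∑ i, softmax τ σ i * σ i) (Set.Ioi 0) := by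
  have hNE : (Finset.univ : Finset (Fin N)).Nonempty := ⟨⟨0, hN⟩, Finset.mem_univ _⟩
  have hBpos : ∀ b : ℝ, 0 < ∑ i, Real.exp (b * σ i) :=
    fun b => Finset.sum_pos (fun i _ => Real.exp_pos _) hNE
  have hf : ∀ τ : ℝ, 0 < τ →
      (∑ i, softmax τ σ i * σ i)
        = (∑ i, σ i * Real.exp (τ⁻¹ * σ i)) / (∑ i, Real.exp (τ⁻¹ * σ i)) := by
    intro τ hτ
    have hd : ∀ i : Fin N, σ i / τ = τ⁻¹ * σ i := fun i => by
      rw [div_eq_mul_inv, mul_comm]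
    unfold softmax
    simp only [hd]
    rw [eq_div_iff (ne_of_gt (hBpos _)), Finset.sum_mul]
    refine Finset.sum_congr rfl fun i _ => ?_
    field_simp
  intro τ₁ h₁ τ₂ h₂ h12
  have hτ₁ : (0:ℝ) < τ₁ := h₁
  have hτ₂ : (0:ℝ) < τ₂ := h₂
  simp only [hf τ₁ hτ₁, hf τ₂ hτ₂]
  rw [div_lt_div_iff₀ (hBpos _) (hBpos _)]
  have hb : τ₂⁻¹ < τ₁⁻¹ := by
    exact inv_strictAnti₀ hτ₁ h12
  exact softmax_key σ _ _ hb hσ
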